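/- arXiv:2303.02644 — 2 statements merged into one kernel-verified Lean document; each statement's English description precedes it below -/
import Mathlib

section
/- For a single logit vector z ∈ R^K with a strict unique maximal coordinate z_{k*}, the function T ↦ σ^{(k*)}(z/T) is strictly decreasing on (0, ∞). -/
/-- Softmax function on `ℝ^K`. -/
noncomputable def softmax {K : ℕ} (z : Fin K → ℝ) (k : Fin K) : ℝ :=
  Real.exp (z k) / ∑ l, Real.exp (z l)

/-- For a logit vector with a strict unique maximal coordinate `z kstar`,
the confidence `T ↦ σ^(kstar)(z/T)` is strictly decreasing on `(0, ∞)`. -/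
theorem stmt2 {K : ℕ} (z : Fin K → ℝ) (kstar : Fin K)
    (hmax : ∀ l, l ≠ kstar → z l < z kstar)
    (hK : 2 ≤ K) :
    StrictAntiOn (fun T : ℝ => softmax (fun l => z l / T) kstar) (Set.Ioi 0) := by
  have key : ∀ T : ℝ, softmax (fun l => z l / T) kstar
      = (∑ l, Real.exp ((z l - z kstar)/T))⁻¹ := by
    intro T
    unfold softmax
    have h : ∑ l, Real.exp ((z l - z kstar)/T)
        = (∑ l, Real.exp (z l / T)) / Real.exp (z kstar / T) := by
      rw [Finset.sum_div]
      refine Finset.sum_congr rfl fun l _ => ?_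
      rw [← Real.exp_sub, ← sub_div]
    rw [h, inv_div]
  intro T1 h1 T2 h2 hlt
  simp only [Set.mem_Ioi] at h1 h2
  simp only [key]
  have hsum : (∑ l, Real.exp ((z l - z kstar)/T1)) < ∑ l, Real.exp ((z l - z kstar)/T2) := by
    have hstep : ∀ l : Fin K, l ≠ kstar →
        Real.exp ((z l - z kstar)/T1) < Real.exp ((z l - z kstar)/T2) := by
      intro l h
      have hc : z l - z kstar < 0 := sub_neg.mpr (hmax l h)
      apply Real.exp_lt_exp.mpr
      rw [div_lt_div_iff₀ h1 h2]
      nlinarith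
    apply Finset.sum_lt_sum
    · intro l _
      rcases eq_or_ne l kstar with rfl | h
      · simp
      · exact le_of_lt (hstep l h)
    · haveI : Nontrivial (Fin K) := ⟨⟨⟨0, by omega⟩, ⟨1, by omega⟩, by simp [Fin.ext_iff]⟩⟩
      obtain ⟨l, hl⟩ := exists_ne kstar
      exact ⟨l, Finset.mem_univ l, hstep l hl⟩
  have hpos : 0 < ∑ l, Real.exp ((z l - z kstar)/T1) :=
    Finset.sum_pos (fun l _ => Real.exp_pos _) ⟨kstar, Finset.mem_univ _⟩
  exact inv_strictAnti₀ hpos hsum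
end

section
/- In the binary case, the average confidence function T ↦ (1/n)∑_{i=1}^n max(σ(z_i/T), 1 − σ(z_i/T)) with logits z_i ∈ R \ {0} is continuous and strictly decreasing on (0,∞), with limits 1 as T → 0⁺ and 1/2 as T → ∞; hence for any target accuracy a ∈ (1/2, 1) there is a unique T_EC > 0 with average confidence equal to a. -/
open Filter Topology

noncomputable def sigmoid (t : ℝ) : ℝ := 1 / (1 + Real.exp (-t))

lemma sig_denom_pos (t : ℝ) : 0 < 1 + Real.exp (-t) := by positivity

lemma sigmoid_neg (t : ℝ) : sigmoid (-t) = 1 - sigmoid t := by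
  unfold sigmoid
  have h1 := (sig_denom_pos t).ne'
  have h2 := (sig_denom_pos (-t)).ne'
  rw [neg_neg] at h2 ⊢
  field_simp
  ring_nf
  rw [add_comm, ← Real.exp_add]
  simp

lemma sigmoid_strictMono : StrictMono sigmoid := by
  intro s t hst
  unfold sigmoid
  apply one_div_lt_one_div_of_lt (sig_denom_pos t)
  have := Real.exp_lt_exp.2 (neg_lt_neg hst)
  linarith

lemma continuous_sigmoid' : Continuous sigmoid := by
  unfold sigmoid
  exact continuous_const.div (by continuity) fun t => (sig_denom_pos t).ne'

lemma sigmoid_zero : sigmoid 0 = 1 / 2 := by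
  simp [sigmoid]; norm_num

lemma max_sigmoid (t : ℝ) : max (sigmoid t) (1 - sigmoid t) = sigmoid |t| := by
  rcases le_or_gt 0 t with h | h
  · rw [abs_of_nonneg h, max_eq_left]
    rw [← sigmoid_neg]
    exact (sigmoid_strictMono.le_iff_le).2 (by linarith)
  · rw [abs_of_neg h, max_eq_right, sigmoid_neg]
    rw [← sigmoid_neg]
    exact (sigmoid_strictMono.le_iff_le).2 (by linarith)

lemma sigmoid_tendsto_atTop : Tendsto sigmoid atTop (nhds 1) := by
  have : Tendsto (fun t : ℝ => 1 + Real.exp (-t)) atTop (nhds 1) := by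
    have := Real.tendsto_exp_atBot.comp tendsto_neg_atTop_atBot
    simpa using tendsto_const_nhds.add this
  have h := this.inv₀ (by norm_num)
  unfold sigmoid
  simpa [one_div] using h

/-- In the binary case, the average confidence
`g(T) = (1/n)∑ max(σ(z_i/T), 1 − σ(z_i/T))` with nonzero logits `z_i` is
continuous and strictly decreasing on `(0, ∞)`, tends to `1` as `T → 0⁺` and to
`1/2` as `T → ∞`; hence for any `a ∈ (1/2, 1)` there is a unique `T_EC > 0`
with `g(T_EC) = a`. -/
theorem stmt11 {n : ℕ} (hn : 0 < n) (z : Fin n → ℝ) (hz : ∀ i, z i ≠ 0) :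
    ContinuousOn (fun T : ℝ => (1 / n : ℝ) * ∑ i, max (sigmoid (z i / T)) (1 - sigmoid (z i / T)))
      (Set.Ioi 0) ∧
    StrictAntiOn (fun T : ℝ => (1 / n : ℝ) * ∑ i, max (sigmoid (z i / T)) (1 - sigmoid (z i / T)))
      (Set.Ioi 0) ∧
    Tendsto (fun T : ℝ => (1 / n : ℝ) * ∑ i, max (sigmoid (z i / T)) (1 - sigmoid (z i / T)))
      (nhdsWithin 0 (Set.Ioi 0)) (nhds 1) ∧
    Tendsto (fun T : ℝ => (1 / n : ℝ) * ∑ i, max (sigmoid (z i / T)) (1 - sigmoid (z i / T)))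
      atTop (nhds (1 / 2)) ∧
    ∀ a ∈ Set.Ioo (1/2 : ℝ) 1, ∃! T : ℝ, 0 < T ∧
      (1 / n : ℝ) * ∑ i, max (sigmoid (z i / T)) (1 - sigmoid (z i / T)) = a := by
  have hn' : (0:ℝ) < n := Nat.cast_pos.2 hn
  set g : ℝ → ℝ := fun T => (1 / n : ℝ) * ∑ i, max (sigmoid (z i / T)) (1 - sigmoid (z i / T))
    with hg
  set h : ℝ → ℝ := fun T => (1 / n : ℝ) * ∑ i, sigmoid (|z i| / T) with hh
  have hgeq : ∀ T : ℝ, 0 < T → g T = h T := by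
    intro T hT
    simp only [hg, hh]
    congr 1
    refine Finset.sum_congr rfl fun i _ => ?_
    rw [max_sigmoid, abs_div, abs_of_pos hT]
  -- continuity of h on Ioi 0
  have hcont : ContinuousOn h (Set.Ioi 0) := by
    apply ContinuousOn.mul continuousOn_const
    apply continuousOn_finset_sum
    intro i _
    exact continuous_sigmoid'.comp_continuousOn
      (continuousOn_const.div continuousOn_id fun T hT => ne_of_gt hT)
  have hcontg : ContinuousOn g (Set.Ioi 0) := hcont.congr hgeq
  -- strict anti
  have hanti : StrictAntiOn g (Set.Ioi 0) := by
    intro s hs t ht hst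
    rw [hgeq s hs, hgeq t ht, hh]
    apply mul_lt_mul_of_pos_left _ (by positivity)
    have : Nonempty (Fin n) := Fin.pos_iff_nonempty.mp hn
    apply Finset.sum_lt_sum_of_nonempty Finset.univ_nonempty
    intro i _
    apply sigmoid_strictMono
    apply div_lt_div_of_pos_left (abs_pos.2 (hz i)) hs hst
  -- limit at 0+
  have hlim0 : Tendsto g (nhdsWithin 0 (Set.Ioi 0)) (nhds 1) := by
    have hsum : Tendsto (fun T => ∑ i, sigmoid (|z i| / T)) (nhdsWithin 0 (Set.Ioi 0))
        (nhds (∑ _i : Fin n, (1:ℝ))) := by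
      apply tendsto_finset_sum
      intro i _
      apply sigmoid_tendsto_atTop.comp
      have : Tendsto (fun T : ℝ => |z i| / T) (nhdsWithin 0 (Set.Ioi 0)) atTop := by
        simp only [div_eq_mul_inv]
        exact Tendsto.const_mul_atTop (abs_pos.2 (hz i)) tendsto_inv_nhdsGT_zero
      exact this
    have : Tendsto h (nhdsWithin 0 (Set.Ioi 0)) (nhds 1) := by
      have := hsum.const_mul (1 / n : ℝ)
      simp only [Finset.sum_const, Finset.card_univ, Fintype.card_fin, nsmul_eq_mul,
        mul_one] at this
      rw [show (1 / n : ℝ) * n = 1 by field_simp] at this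
      exact this
    refine this.congr' ?_
    filter_upwards [self_mem_nhdsWithin] with T hT
    exact (hgeq T hT).symm
  -- limit atTop
  have hlimT : Tendsto g atTop (nhds (1 / 2)) := by
    have hsum : Tendsto (fun T => ∑ i, sigmoid (|z i| / T)) atTop
        (nhds (∑ _i : Fin n, (1/2:ℝ))) := by
      apply tendsto_finset_sum
      intro i _
      have h0 : Tendsto (fun T : ℝ => |z i| / T) atTop (nhds 0) :=
        tendsto_const_nhds.div_atTop tendsto_id
      have := (continuous_sigmoid'.tendsto 0).comp h0
      simpa [sigmoid_zero, Function.comp_def] using this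
    have hth : Tendsto h atTop (nhds (1 / 2)) := by
      have := hsum.const_mul (1 / n : ℝ)
      simp only [Finset.sum_const, Finset.card_univ, Fintype.card_fin, nsmul_eq_mul] at this
      rw [show (1 / n : ℝ) * (n * (1/2)) = 1/2 by field_simp] at this
      exact this
    refine hth.congr' ?_
    filter_upwards [eventually_gt_atTop 0] with T hT
    exact (hgeq T hT).symm
  refine ⟨hcontg, hanti, hlim0, hlimT, ?_⟩
  intro a ⟨ha1, ha2⟩
  -- find T0 with g T0 > a
  have h1 : ∀ᶠ T in nhdsWithin 0 (Set.Ioi 0), a < g T :=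
    hlim0.eventually (eventually_gt_nhds ha2)
  obtain ⟨T0, hT0a, hT0pos⟩ := (h1.and self_mem_nhdsWithin).exists
  have h2 : ∀ᶠ T in atTop, g T < a := hlimT.eventually (eventually_lt_nhds ha1)
  obtain ⟨T1, hT1a, hT1big⟩ := (h2.and (eventually_ge_atTop (T0 + 1))).exists
  have hT01 : T0 < T1 := by linarith
  have hT1pos : (0:ℝ) < T1 := by
    have : (0:ℝ) < T0 := hT0pos
    linarith
  have hsub : Set.Icc T0 T1 ⊆ Set.Ioi 0 := fun x hx => lt_of_lt_of_le hT0pos hx.1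
  have hivt := intermediate_value_Icc' hT01.le (hcontg.mono hsub)
  have hmem : a ∈ Set.Icc (g T1) (g T0) := ⟨hT1a.le, hT0a.le⟩
  obtain ⟨T, hTmem, hTa⟩ := hivt hmem
  refine ⟨T, ⟨hsub hTmem, hTa⟩, ?_⟩
  rintro T' ⟨hT'pos, hT'a⟩
  exact hanti.injOn hT'pos (hsub hTmem) (hT'a.trans hTa.symm)
end
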